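/- Let Y ⊆ X be sets and let 𝓔, 𝓔' be uniformly locally finite coarse structures on Y and X respectively. Then 𝓔 ⊆ 𝓔' if and only if the inclusion ℓ²(Y) ⊆ ℓ²(X) induces an inclusion of C*_u(Y,𝓔) into C*_u(X,𝓔'). -/

import Mathlib

open ContinuousLinearMap

/-- A coarse structure on `X`: a collection of subsets of `X × X` containing the diagonal
and closed under subsets, finite unions, inverses, and composition. -/
structure CoarseStructure (X : Type*) where
  sets : Set (Set (X × X))
  diagonal_mem : {p : X × X | p.1 = p.2} ∈ sets
  subset_mem : ∀ E ∈ sets, ∀ F ⊆ E, F ∈ sets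
  union_mem : ∀ E ∈ sets, ∀ F ∈ sets, E ∪ F ∈ sets
  inv_mem : ∀ E ∈ sets, {p : X × X | (p.2, p.1) ∈ E} ∈ sets
  comp_mem : ∀ E ∈ sets, ∀ F ∈ sets,
    {p : X × X | ∃ y, (p.1, y) ∈ E ∧ (y, p.2) ∈ F} ∈ sets

/-- A coarse structure is uniformly locally finite if each entourage has uniformly
finite sections. -/
def CoarseStructure.ULF {X : Type*} (𝓔 : CoarseStructure X) : Prop :=
  ∀ E ∈ 𝓔.sets, ∃ k : ℕ, ∀ x : X,
    Set.Finite {y | (x, y) ∈ E} ∧ Nat.card {y | (x, y) ∈ E} ≤ k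

noncomputable section

/-- The standard basis vector `δ_x` of `ℓ²(X)`. -/
def deltaVec (X : Type*) [DecidableEq X] (x : X) : lp (fun _ : X => ℂ) 2 :=
  lp.single 2 x 1

/-- The rank-one orthogonal projection `e_{xx}` onto `ℂ δ_x` in `ℓ²(X)`. -/
def ee (X : Type*) [DecidableEq X] (x : X) :
    lp (fun _ : X => ℂ) 2 →L[ℂ] lp (fun _ : X => ℂ) 2 :=
  (innerSL ℂ (deltaVec X x)).smulRight (deltaVec X x)

/-- The support of an operator `a` on `ℓ²(X)`:
`{(x, y) : ⟨a δ_x, δ_y⟩ ≠ 0}`. -/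
def opSupport {X : Type*} [DecidableEq X]
    (a : lp (fun _ : X => ℂ) 2 →L[ℂ] lp (fun _ : X => ℂ) 2) : Set (X × X) :=
  {p | inner (𝕜 := ℂ) (a (deltaVec X p.1)) (deltaVec X p.2) ≠ 0}

/-- The uniform Roe algebra of `(X, 𝓔)`: the operator-norm closure of the set of
operators with `𝓔`-bounded propagation. -/
def RoeAlgebra {X : Type*} [DecidableEq X] (𝓔 : CoarseStructure X) :
    Set (lp (fun _ : X => ℂ) 2 →L[ℂ] lp (fun _ : X => ℂ) 2) :=
  closure {a | opSupport a ∈ 𝓔.sets}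

end

section RoeAux

open scoped ENNReal NNReal

noncomputable section

local notation "⟪" x ", " y "⟫" => inner (𝕜 := ℂ) x y

lemma deltaVec_apply {X : Type*} [DecidableEq X] (x j : X) :
    deltaVec X x j = if j = x then 1 else 0 := by
  rw [deltaVec, lp.single_apply]
  by_cases h : j = x <;> simp [h]

lemma inner_deltaVec_left {X : Type*} [DecidableEq X] (x : X) (f : lp (fun _ : X => ℂ) 2) :
    ⟪deltaVec X x, f⟫ = f x := by
  rw [deltaVec, lp.inner_single_left]
  simp [RCLike.inner_apply]

lemma inner_deltaVec_right {X : Type*} [DecidableEq X] (x : X) (f : lp (fun _ : X => ℂ) 2) :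
    ⟪f, deltaVec X x⟫ = starRingEnd ℂ (f x) := by
  rw [deltaVec, lp.inner_single_right]
  simp [RCLike.inner_apply]

lemma norm_deltaVec {X : Type*} [DecidableEq X] (x : X) : ‖deltaVec X x‖ = 1 := by
  have := lp.norm_single (E := fun _ : X => ℂ) (p := 2) (by norm_num) x (1:ℂ)
  simpa [deltaVec] using this

variable {X : Type*} [DecidableEq X] (Y : Set X) [DecidableEq Y]
variable (J : lp (fun _ : Y => ℂ) 2 →L[ℂ] lp (fun _ : X => ℂ) 2)
  (hJ : ∀ y : Y, J (deltaVec Y y) = deltaVec X (y : X))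

include hJ in
lemma adjJ_apply (x : X) (y : Y) :
    (adjoint J (deltaVec X x) : ∀ _ : Y, ℂ) y = if x = (y : X) then 1 else 0 := by
  have h1 : (adjoint J (deltaVec X x) : ∀ _ : Y, ℂ) y
      = ⟪deltaVec Y y, adjoint J (deltaVec X x)⟫ := (inner_deltaVec_left y _).symm
  rw [h1, adjoint_inner_right, hJ, inner_deltaVec_left, deltaVec_apply]
  exact if_congr eq_comm rfl rfl

include hJ in
lemma adjJ_not_mem {x : X} (hx : x ∉ Y) : adjoint J (deltaVec X x) = 0 := by
  apply lp.ext
  funext y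
  rw [adjJ_apply Y J hJ]
  simp only [lp.coeFn_zero, Pi.zero_apply, ite_eq_right_iff]
  intro h; exact absurd (h ▸ y.2) hx

include hJ in
lemma adjJ_mem (y : Y) : adjoint J (deltaVec X (y : X)) = deltaVec Y y := by
  apply lp.ext
  funext y'
  rw [adjJ_apply Y J hJ, deltaVec_apply]
  by_cases h : y' = y
  · simp [h]
  · rw [if_neg h, if_neg (fun hc => h (Subtype.ext hc.symm))]

include hJ in
lemma conj_entry (a : lp (fun _ : Y => ℂ) 2 →L[ℂ] lp (fun _ : Y => ℂ) 2) (y y' : Y) :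
    ⟪(J ∘L a ∘L adjoint J) (deltaVec X (y : X)), deltaVec X (y' : X)⟫
      = ⟪a (deltaVec Y y), deltaVec Y y'⟫ := by
  rw [comp_apply, comp_apply, adjJ_mem Y J hJ, ← adjoint_inner_right, adjJ_mem Y J hJ]

include hJ in
lemma opSupport_conj_subset (a : lp (fun _ : Y => ℂ) 2 →L[ℂ] lp (fun _ : Y => ℂ) 2) :
    opSupport (J ∘L a ∘L adjoint J) ⊆ (fun p : Y × Y => ((p.1 : X), (p.2 : X))) '' opSupport a := by
  rintro ⟨x, x'⟩ hx
  by_cases h1 : x ∈ Y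
  · by_cases h2 : x' ∈ Y
    · refine ⟨(⟨x, h1⟩, ⟨x', h2⟩), ?_, rfl⟩
      show ⟪a (deltaVec Y ⟨x, h1⟩), deltaVec Y ⟨x', h2⟩⟫ ≠ 0
      rw [← conj_entry Y J hJ a ⟨x, h1⟩ ⟨x', h2⟩]
      exact hx
    · exfalso; apply hx
      show ⟪(J ∘L a ∘L adjoint J) (deltaVec X x), deltaVec X x'⟫ = 0
      rw [comp_apply, comp_apply, ← adjoint_inner_right, adjJ_not_mem Y J hJ h2,
        inner_zero_right]
  · exfalso; apply hx
    show ⟪(J ∘L a ∘L adjoint J) (deltaVec X x), deltaVec X x'⟫ = 0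
    rw [comp_apply, comp_apply, adjJ_not_mem Y J hJ h1]
    simp

/-- sum of squared norms of an `ℓ²` element, as an extended nonnegative real -/
lemma lp_tsum_sq {Y : Type*} (g : lp (fun _ : Y => ℂ) 2) :
    ∑' y, ((‖g y‖₊ : ℝ≥0∞))^2 = ((‖g‖₊^2 : ℝ≥0) : ℝ≥0∞) := by
  have hreal : HasSum (fun y => ‖g y‖ ^ (2:ℝ)) (‖g‖ ^ (2:ℝ)) := by
    have := lp.hasSum_norm (p := 2) (by norm_num) g
    simpa using this
  have hr2 : HasSum (fun y => ((‖g y‖₊^2 : ℝ≥0) : ℝ)) ((‖g‖₊^2 : ℝ≥0) : ℝ) := by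
    convert hreal using 2 with y
    · push_cast [← Real.rpow_natCast]; norm_num
    · push_cast [← Real.rpow_natCast]; norm_num
  have hnn : HasSum (fun y => (‖g y‖₊^2 : ℝ≥0)) (‖g‖₊^2) := NNReal.hasSum_coe.mp hr2
  rw [show (fun y => ((‖g y‖₊ : ℝ≥0∞))^2) = fun y => ((‖g y‖₊^2 : ℝ≥0) : ℝ≥0∞) by
    funext y; push_cast; ring]
  rw [← ENNReal.coe_tsum hnn.summable, hnn.tsum_eq]

/-- Existence of the "characteristic-function" operator of a set `E ⊆ Y × Y` with
uniformly finite sections (a Schur-test construction). -/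
lemma exists_schur {Y : Type*} [DecidableEq Y] (E : Set (Y × Y)) (k k' : ℕ)
    (hrow : ∀ y : Y, Set.Finite {z | (y, z) ∈ E} ∧ Nat.card {z | (y, z) ∈ E} ≤ k)
    (hcol : ∀ z : Y, Set.Finite {y | (y, z) ∈ E} ∧ Nat.card {y | (y, z) ∈ E} ≤ k') :
    ∃ a : lp (fun _ : Y => ℂ) 2 →L[ℂ] lp (fun _ : Y => ℂ) 2,
      ∀ y z : Y, ((y, z) ∈ E → ⟪a (deltaVec Y y), deltaVec Y z⟫ = 1) ∧
        ((y, z) ∉ E → ⟪a (deltaVec Y y), deltaVec Y z⟫ = 0) := by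
  classical
  set S : Y → Finset Y := fun z => (hcol z).1.toFinset with hSdef
  have hS : ∀ z y, y ∈ S z ↔ (y, z) ∈ E := by
    intro z y; simp [hSdef, Set.Finite.mem_toFinset]
  have hScard : ∀ z, (S z).card ≤ k' := by
    intro z
    have := (hcol z).2
    rwa [Nat.card_coe_set_eq, Set.ncard_eq_toFinset_card _ (hcol z).1] at this
  set R : Y → Finset Y := fun y => (hrow y).1.toFinset with hRdef
  have hR : ∀ y z, z ∈ R y ↔ (y, z) ∈ E := by
    intro y z; simp [hRdef, Set.Finite.mem_toFinset]
  have hRcard : ∀ y, (R y).card ≤ k := by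
    intro y
    have := (hrow y).2
    rwa [Nat.card_coe_set_eq, Set.ncard_eq_toFinset_card _ (hrow y).1] at this
  set T : (∀ _ : Y, ℂ) → (Y → ℂ) := fun f z => ∑ y ∈ S z, f y with hTdef
  -- key estimate
  have key : ∀ f : ∀ _ : Y, ℂ,
      ∑' z, ((‖T f z‖₊ : ℝ≥0∞))^2 ≤ (k : ℝ≥0∞) * (k' : ℝ≥0∞) * ∑' y, ((‖f y‖₊ : ℝ≥0∞))^2 := by
    intro f
    have h1 : ∀ z, ((‖T f z‖₊ : ℝ≥0∞))^2 ≤ (k' : ℝ≥0∞) * ∑ y ∈ S z, ((‖f y‖₊ : ℝ≥0∞))^2 := by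
      intro z
      have a1 : ‖T f z‖₊ ≤ ∑ y ∈ S z, ‖f y‖₊ := nnnorm_sum_le _ _
      have a2 : (∑ y ∈ S z, ‖f y‖₊)^2 ≤ ((S z).card : ℝ≥0) * ∑ y ∈ S z, ‖f y‖₊^2 := by
        have := Finset.sum_mul_sq_le_sq_mul_sq (S z) (fun _ => (1 : ℝ≥0)) (fun y => ‖f y‖₊)
        simpa using this
      have a3 : ‖T f z‖₊^2 ≤ (k' : ℝ≥0) * ∑ y ∈ S z, ‖f y‖₊^2 := by
        refine le_trans (le_trans (pow_le_pow_left₀ zero_le a1 2) a2) ?_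
        exact mul_le_mul_of_nonneg_right (by exact_mod_cast hScard z) zero_le
      calc ((‖T f z‖₊ : ℝ≥0∞))^2 = ((‖T f z‖₊^2 : ℝ≥0) : ℝ≥0∞) := by push_cast; ring
        _ ≤ (((k' : ℝ≥0) * ∑ y ∈ S z, ‖f y‖₊^2 : ℝ≥0) : ℝ≥0∞) := by exact_mod_cast a3
        _ = (k' : ℝ≥0∞) * ∑ y ∈ S z, ((‖f y‖₊ : ℝ≥0∞))^2 := by push_cast; ring_nf
    set c : Y → ℝ≥0∞ := fun y => ((‖f y‖₊ : ℝ≥0∞))^2 with hcdef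
    have h2 : ∑' z, ∑ y ∈ S z, c y ≤ (k : ℝ≥0∞) * ∑' y, c y := by
      have hzy : ∀ z, ∑ y ∈ S z, c y = ∑' y, (if (y, z) ∈ E then c y else 0) := by
        intro z
        rw [tsum_eq_sum (s := S z) (fun y hy => if_neg (fun h => hy ((hS z y).2 h)))]
        exact Finset.sum_congr rfl fun y hy => (if_pos ((hS z y).1 hy)).symm
      calc ∑' z, ∑ y ∈ S z, c y = ∑' z, ∑' y, (if (y, z) ∈ E then c y else 0) := by
            exact tsum_congr hzy
        _ = ∑' y, ∑' z, (if (y, z) ∈ E then c y else 0) := ENNReal.tsum_comm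
        _ ≤ ∑' y, (k : ℝ≥0∞) * c y := by
            refine ENNReal.tsum_le_tsum fun y => ?_
            rw [tsum_eq_sum (s := R y) (fun z hz => if_neg (fun h => hz ((hR y z).2 h)))]
            calc ∑ z ∈ R y, (if (y, z) ∈ E then c y else 0)
                = ∑ _z ∈ R y, c y :=
                  Finset.sum_congr rfl fun z hz => if_pos ((hR y z).1 hz)
              _ = ((R y).card : ℝ≥0∞) * c y := by rw [Finset.sum_const, nsmul_eq_mul]
              _ ≤ (k : ℝ≥0∞) * c y := by
                  exact mul_le_mul_left (by exact_mod_cast hRcard y) _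
        _ = (k : ℝ≥0∞) * ∑' y, c y := ENNReal.tsum_mul_left
    calc ∑' z, ((‖T f z‖₊ : ℝ≥0∞))^2 ≤ ∑' z, (k' : ℝ≥0∞) * ∑ y ∈ S z, c y :=
          ENNReal.tsum_le_tsum h1
      _ = (k' : ℝ≥0∞) * ∑' z, ∑ y ∈ S z, c y := ENNReal.tsum_mul_left
      _ ≤ (k' : ℝ≥0∞) * ((k : ℝ≥0∞) * ∑' y, c y) := mul_le_mul_right h2 _
      _ = (k : ℝ≥0∞) * (k' : ℝ≥0∞) * ∑' y, c y := by ring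
  -- membership
  have hmem : ∀ f : lp (fun _ : Y => ℂ) 2, Memℓp (T f) 2 := by
    intro f
    have hfin : ∑' z, ((‖T (f : ∀ _ : Y, ℂ) z‖₊ : ℝ≥0∞))^2 ≠ ⊤ := by
      refine ne_top_of_le_ne_top ?_ (key f)
      rw [lp_tsum_sq f]
      exact ENNReal.mul_ne_top (ENNReal.mul_ne_top (ENNReal.natCast_ne_top _)
        (ENNReal.natCast_ne_top _)) ENNReal.coe_ne_top
    have hsum : Summable (fun z => (‖T (f : ∀ _ : Y, ℂ) z‖₊^2 : ℝ≥0)) := by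
      rw [← ENNReal.tsum_coe_ne_top_iff_summable]
      simpa [ENNReal.coe_pow] using hfin
    apply memℓp_gen
    have : Summable (fun z => ((‖T (f : ∀ _ : Y, ℂ) z‖₊^2 : ℝ≥0) : ℝ)) :=
      NNReal.summable_coe.mpr hsum
    refine this.congr fun z => ?_
    push_cast [← Real.rpow_natCast]
    norm_num
  -- the linear map
  set aLin : lp (fun _ : Y => ℂ) 2 →ₗ[ℂ] lp (fun _ : Y => ℂ) 2 :=
    { toFun := fun f => ⟨T f, hmem f⟩
      map_add' := by
        intro f g
        apply lp.ext
        funext z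
        simp only [hTdef, lp.coeFn_add, Pi.add_apply]
        exact Finset.sum_add_distrib
      map_smul' := by
        intro c f
        apply lp.ext
        funext z
        simp only [hTdef, lp.coeFn_smul, Pi.smul_apply, RingHom.id_apply, smul_eq_mul]
        exact (Finset.mul_sum _ _ _).symm } with haLin
  have hcoe : ∀ f : lp (fun _ : Y => ℂ) 2, (aLin f : ∀ _ : Y, ℂ) = T f := fun f => rfl
  -- the norm bound
  have hbound : ∀ f : lp (fun _ : Y => ℂ) 2,
      ‖aLin f‖ ≤ (NNReal.sqrt ((k : ℝ≥0) * k') : ℝ) * ‖f‖ := by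
    intro f
    have e1 : ((‖aLin f‖₊^2 : ℝ≥0) : ℝ≥0∞)
        ≤ (((k : ℝ≥0) * k' : ℝ≥0) : ℝ≥0∞) * ((‖f‖₊^2 : ℝ≥0) : ℝ≥0∞) := by
      rw [← lp_tsum_sq (aLin f), ← lp_tsum_sq f]
      have := key (f : ∀ _ : Y, ℂ)
      simpa [hcoe] using this
    have e2 : ‖aLin f‖₊^2 ≤ ((k : ℝ≥0) * k') * ‖f‖₊^2 := by
      rw [← ENNReal.coe_mul] at e1
      exact_mod_cast e1
    have e3 : ‖aLin f‖₊ ≤ NNReal.sqrt ((k : ℝ≥0) * k') * ‖f‖₊ := by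
      have h4 : NNReal.sqrt (‖aLin f‖₊^2) ≤ NNReal.sqrt (((k : ℝ≥0) * k') * ‖f‖₊^2) :=
        NNReal.sqrt_le_sqrt.mpr e2
      rwa [NNReal.sqrt_sq, NNReal.sqrt_mul, NNReal.sqrt_sq] at h4
    calc ‖aLin f‖ = ((‖aLin f‖₊ : ℝ)) := (coe_nnnorm _).symm
      _ ≤ ((NNReal.sqrt ((k : ℝ≥0) * k') * ‖f‖₊ : ℝ≥0) : ℝ) := NNReal.coe_le_coe.mpr e3
      _ = (NNReal.sqrt ((k : ℝ≥0) * k') : ℝ) * ‖f‖ := by push_cast; rfl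
  set a : lp (fun _ : Y => ℂ) 2 →L[ℂ] lp (fun _ : Y => ℂ) 2 :=
    aLin.mkContinuous _ hbound with ha
  refine ⟨a, fun y z => ?_⟩
  have hav : (a (deltaVec Y y) : ∀ _ : Y, ℂ) z = if (y, z) ∈ E then 1 else 0 := by
    have h0 : (a (deltaVec Y y) : ∀ _ : Y, ℂ) z = T (deltaVec Y y) z := rfl
    rw [h0, hTdef]
    simp only
    rw [show (∑ y' ∈ S z, (deltaVec Y y : ∀ _ : Y, ℂ) y')
        = ∑ y' ∈ S z, if y' = y then (1:ℂ) else 0 from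
      Finset.sum_congr rfl fun y' _ => deltaVec_apply y y']
    rw [Finset.sum_ite_eq' (S z) y (fun _ => (1:ℂ))]
    exact if_congr (hS z y) rfl rfl
  constructor <;> intro hE' <;> rw [inner_deltaVec_right, hav]
  · rw [if_pos hE']; simp
  · rw [if_neg hE']; simp

end

end RoeAux

/-- Let `Y ⊆ X`, with u.l.f. coarse structures `𝓔` on `Y` and `𝓔'` on `X`, and let
`J : ℓ²(Y) → ℓ²(X)` be the inclusion isometry (determined by `J δ_y = δ_y`).  Then
`𝓔 ⊆ 𝓔'` (under the inclusion `Y × Y ⊆ X × X`) if and only if conjugation by `J`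
maps `C*_u(Y, 𝓔)` into `C*_u(X, 𝓔')`. -/
theorem coarse_subset_iff_roe_subset {X : Type*} [DecidableEq X] (Y : Set X)
    [DecidableEq Y]
    (𝓔 : CoarseStructure Y) (𝓔' : CoarseStructure X)
    (h𝓔 : 𝓔.ULF) (h𝓔' : 𝓔'.ULF)
    (J : lp (fun _ : Y => ℂ) 2 →L[ℂ] lp (fun _ : X => ℂ) 2)
    (hJiso : ∀ f, ‖J f‖ = ‖f‖)
    (hJ : ∀ y : Y, J (deltaVec Y y) = deltaVec X (y : X)) :
    (∀ E ∈ 𝓔.sets,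
        (fun p : Y × Y => ((p.1 : X), (p.2 : X))) '' E ∈ 𝓔'.sets) ↔
      ∀ a ∈ RoeAlgebra 𝓔, (J ∘L a ∘L adjoint J) ∈ RoeAlgebra 𝓔' := by
  constructor
  · intro h a ha
    have hΦcont : Continuous (fun b : lp (fun _ : Y => ℂ) 2 →L[ℂ] lp (fun _ : Y => ℂ) 2 =>
        J ∘L b ∘L adjoint J) :=
      continuous_const.clm_comp (continuous_id.clm_comp continuous_const)
    refine map_mem_closure (f := fun b => J ∘L b ∘L adjoint J) hΦcont ha ?_
    intro b hb
    show opSupport (J ∘L b ∘L adjoint J) ∈ 𝓔'.sets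
    exact 𝓔'.subset_mem _ (h _ hb) _ (opSupport_conj_subset Y J hJ b)
  · intro H E hE
    obtain ⟨k, hk⟩ := h𝓔 E hE
    obtain ⟨k', hk'⟩ := h𝓔 _ (𝓔.inv_mem E hE)
    obtain ⟨a, hA⟩ := exists_schur E k k' hk (fun z => hk' z)
    have haSupp : opSupport a ∈ 𝓔.sets := by
      refine 𝓔.subset_mem E hE _ ?_
      rintro ⟨y, z⟩ hyz
      by_contra hmemE
      exact hyz ((hA y z).2 hmemE)
    have hconj := H a (subset_closure haSupp)
    rw [RoeAlgebra, Metric.mem_closure_iff] at hconj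
    obtain ⟨b, hb, hdist⟩ := hconj (1/2) (by norm_num)
    refine 𝓔'.subset_mem _ hb _ ?_
    rintro ⟨x, x'⟩ ⟨⟨y, z⟩, hyzE, heq⟩
    obtain ⟨rfl, rfl⟩ := Prod.mk.injEq _ _ _ _ ▸ heq
    show inner (𝕜 := ℂ) (b (deltaVec X (y : X))) (deltaVec X (z : X)) ≠ 0
    have h1 : inner (𝕜 := ℂ) ((J ∘L a ∘L adjoint J) (deltaVec X (y : X)))
        (deltaVec X (z : X)) = 1 := by
      rw [conj_entry Y J hJ]
      exact (hA y z).1 hyzE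
    have hlt : ‖(J ∘L a ∘L adjoint J) - b‖ < 1/2 := by
      rw [← dist_eq_norm]; exact hdist
    intro hb0
    have hone : inner (𝕜 := ℂ) (((J ∘L a ∘L adjoint J) - b) (deltaVec X (y : X)))
        (deltaVec X (z : X)) = 1 := by
      rw [ContinuousLinearMap.sub_apply, inner_sub_left, h1, hb0, sub_zero]
    set c := (J ∘L a ∘L adjoint J) - b with hc
    set u := deltaVec X (y : X) with hu
    set v := deltaVec X (z : X) with hv
    have h2 : ‖inner (𝕜 := ℂ) (c u) v‖ ≤ ‖c‖ := by
      have i1 : ‖inner (𝕜 := ℂ) (c u) v‖ ≤ ‖c u‖ * ‖v‖ := norm_inner_le_norm _ _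
      have i2 : ‖c u‖ * ‖v‖ ≤ (‖c‖ * ‖u‖) * ‖v‖ :=
        mul_le_mul_of_nonneg_right (ContinuousLinearMap.le_opNorm _ _) (norm_nonneg _)
      have i3 : (‖c‖ * ‖u‖) * ‖v‖ = ‖c‖ := by
        rw [hu, hv, norm_deltaVec, norm_deltaVec]; ring
      linarith
    rw [hone] at h2
    rw [norm_one] at h2
    linarith
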